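/- Let W be the Coxeter group of the type D_4 Coxeter matrix, with simple reflections r_a, r_b, r_d (the three outer nodes) and r_c (the central node). Let ρ be the (unique) automorphism of W with ρ(r_a) = r_b, ρ(r_b) = r_d, ρ(r_d) = r_a and ρ(r_c) = r_c, and let τ be the (unique) automorphism with τ(r_a) = r_b, τ(r_b) = r_a, τ(r_d) = r_d and τ(r_c) = r_c. Then the fixed subgroup {w ∈ W : ρ(w) = w} equals the subgroup {w ∈ W : ρ(w) = w and τ(w) = w}, and both are isomorphic to the Coxeter group of the type G_2 Coxeter matrix. -/

import Mathlib

/-!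
STATEMENT 10: Let `W` be the Coxeter group of type `D₄`, with outer nodes `a, b, d` and
central node `c` (each outer node joined to `c` with label 3, outer nodes mutually
non-adjacent). Let `ρ` be the automorphism cyclically permuting `r_a ↦ r_b ↦ r_d ↦ r_a` and
fixing `r_c`, and `τ` the automorphism swapping `r_a ↔ r_b` and fixing `r_d`, `r_c`.
Then `{w : ρ(w) = w} = {w : ρ(w) = w and τ(w) = w}`, and both are isomorphic to the Coxeter
group of type `G₂`.

We index `D₄` by `Fin 4` with `a = 0`, `c = 1`, `b = 2`, `d = 3`.
-/

/-- The Coxeter matrix of type `D₄`: central node `1` joined to the three outer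
nodes `0, 2, 3` with label 3; outer nodes mutually labelled 2. -/
def D4Mat : CoxeterMatrix (Fin 4) where
  M := !![1, 3, 2, 2;
          3, 1, 3, 3;
          2, 3, 1, 2;
          2, 3, 2, 1]
  off_diagonal := by intro i i' h; fin_cases i <;> fin_cases i' <;> simp_all

/-- The subgroup of elements fixed by a group automorphism. -/
def fixedSubgroup {G : Type*} [Group G] (σ : G ≃* G) : Subgroup G where
  carrier := { w | σ w = w }
  one_mem' := map_one σ
  mul_mem' := by
    intro a b ha hb
    simp only [Set.mem_setOf_eq, map_mul] at *
    rw [ha, hb]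
  inv_mem' := by
    intro a ha
    simp only [Set.mem_setOf_eq, map_inv] at *
    rw [ha]



set_option maxRecDepth 10000

noncomputable def cs : CoxeterSystem D4Mat D4Mat.Group := D4Mat.toCoxeterSystem
noncomputable def π (l : List (Fin 4)) : D4Mat.Group := cs.wordProd l
noncomputable def cs2 : CoxeterSystem CoxeterMatrix.G₂ CoxeterMatrix.G₂.Group :=
  CoxeterMatrix.G₂.toCoxeterSystem
noncomputable def πG (l : List (Fin 2)) : CoxeterMatrix.G₂.Group := cs2.wordProd l

theorem key (u l r v : List (Fin 4)) (h : π l = π r) :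
    π (u ++ l ++ v) = π (u ++ r ++ v) := by
  simp only [π] at h ⊢
  simp only [CoxeterSystem.wordProd_append, h]

theorem keyG (u l r v : List (Fin 2)) (h : πG l = πG r) :
    πG (u ++ l ++ v) = πG (u ++ r ++ v) := by
  simp only [πG] at h ⊢
  simp only [CoxeterSystem.wordProd_append, h]

theorem bsq (i : Fin 4) : π [i,i] = π [] := by
  simp [π, CoxeterSystem.wordProd, cs.simple_mul_simple_self]

theorem bsqG (i : Fin 2) : πG [i,i] = πG [] := by
  simp [πG, CoxeterSystem.wordProd, cs2.simple_mul_simple_self]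

theorem pairrel (i j : Fin 4) (h : D4Mat.M i j = 2) : π [i,j] = π [j,i] := by
  have h3 := cs.simple_mul_simple_pow i j
  rw [h] at h3
  have : (cs.simple i * cs.simple j)⁻¹ = cs.simple i * cs.simple j := by
    rw [inv_eq_iff_mul_eq_one, ← sq, h3]
  simp only [mul_inv_rev, cs.inv_simple] at this
  simp [π, CoxeterSystem.wordProd, this]

theorem braidrel (i j : Fin 4) (h : D4Mat.M i j = 3) : π [i,j,i] = π [j,i,j] := by
  have h3 := cs.simple_mul_simple_pow i j
  rw [h] at h3
  have e : (cs.simple i * cs.simple j * cs.simple i) * (cs.simple j * cs.simple i * cs.simple j)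
      = 1 := by
    rw [← h3]; simp [pow_succ, mul_assoc]
  have : cs.simple i * cs.simple j * cs.simple i = (cs.simple j * cs.simple i * cs.simple j)⁻¹ :=
    eq_inv_of_mul_eq_one_left e
  simp only [mul_inv_rev, cs.inv_simple] at this
  simp [π, CoxeterSystem.wordProd, mul_assoc] at this ⊢
  rw [this]

theorem pr (i j : Fin 4) (h : D4Mat.M i j = 2 := by decide) : π [i,j] = π [j,i] := pairrel i j h
theorem br (i j : Fin 4) (h : D4Mat.M i j = 3 := by decide) : π [i,j,i] = π [j,i,j] := braidrel i j h

theorem brG : πG [0,1,0,1,0,1] = πG [1,0,1,0,1,0] := by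
  have := cs2.wordProd_braidWord_eq 0 1
  simpa [CoxeterSystem.braidWord, CoxeterSystem.alternatingWord, πG, CoxeterMatrix.G₂] using this

def f4 : Fin 4 → Equiv.Perm (Fin 8)
| 0 => Equiv.swap 0 1 * Equiv.swap 4 5
| 1 => Equiv.swap 1 2 * Equiv.swap 5 6
| 2 => Equiv.swap 2 3 * Equiv.swap 6 7
| 3 => Equiv.swap 2 7 * Equiv.swap 3 6

theorem lift4 : CoxeterMatrix.IsLiftable D4Mat f4 :=
  show ∀ i i', (f4 i * f4 i') ^ (D4Mat.M i i') = 1 by decide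

noncomputable def φ : D4Mat.Group →* Equiv.Perm (Fin 8) := cs.lift ⟨f4, lift4⟩

theorem phi_word (l : List (Fin 4)) : φ (π l) = (l.map f4).prod := by
  induction l with
  | nil => simp [π, CoxeterSystem.wordProd]
  | cons i t ih =>
    rw [π, CoxeterSystem.wordProd_cons, map_mul, List.map_cons, List.prod_cons, ← π, ih,
      φ, CoxeterSystem.lift_apply_simple]

theorem neq (l1 l2 : List (Fin 4)) (h : (l1.map f4).prod ≠ (l2.map f4).prod) : π l1 ≠ π l2 :=
  fun he => h (by rw [← phi_word, ← phi_word, he])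

theorem mulw (a b : List (Fin 4)) : π a * π b = π (a ++ b) :=
  (cs.wordProd_append a b).symm

theorem mulwG (a b : List (Fin 2)) : πG a * πG b = πG (a ++ b) :=
  (cs2.wordProd_append a b).symm

theorem ceq_0_0 : π [0] = π [0] := rfl

theorem ceq_0_1 : π [1] = π [1] := rfl

theorem ceq_0_2 : π [2] = π [2] := rfl

theorem ceq_0_3 : π [3] = π [3] := rfl

theorem ceq_1_0 : π [0,0] = π [] := by
  calc π [0,0] = π [0,0] := rfl
    _ = π [] := key [] [0,0] [] [] (bsq 0)

theorem ceq_1_1 : π [0,1] = π [0,1] := rfl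

theorem ceq_1_2 : π [0,2] = π [0,2,3,3] := by
  calc π [0,2] = π [0,2] := rfl
    _ = π [0,2,3,3] := key [0,2] [] [3,3] [] (bsq 3).symm

theorem ceq_1_3 : π [0,3] = π [0,2,3,2] := by
  calc π [0,3] = π [0,3] := rfl
    _ = π [0,3,2,2] := key [0,3] [] [2,2] [] (bsq 2).symm
    _ = π [0,2,3,2] := key [0] [3,2] [2,3] [2] (pr 2 3).symm

theorem ceq_2_0 : π [2,0] = π [0,2,3,3] := by
  calc π [2,0] = π [2,0] := rfl
    _ = π [0,2] := key [] [2,0] [0,2] [] (pr 0 2).symm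
    _ = π [0,2,3,3] := key [0,2] [] [3,3] [] (bsq 3).symm

theorem ceq_2_1 : π [2,1] = π [2,1] := rfl

theorem ceq_2_2 : π [2,2] = π [] := by
  calc π [2,2] = π [2,2] := rfl
    _ = π [] := key [] [2,2] [] [] (bsq 2)

theorem ceq_2_3 : π [2,3] = π [0,2,3,0] := by
  calc π [2,3] = π [2,3] := rfl
    _ = π [2,3,0,0] := key [2,3] [] [0,0] [] (bsq 0).symm
    _ = π [2,0,3,0] := key [2] [3,0] [0,3] [0] (pr 0 3).symm
    _ = π [0,2,3,0] := key [] [2,0] [0,2] [3,0] (pr 0 2).symm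

theorem ceq_3_0 : π [3,0] = π [0,2,3,2] := by
  calc π [3,0] = π [3,0] := rfl
    _ = π [0,3] := key [] [3,0] [0,3] [] (pr 0 3).symm
    _ = π [0,3,2,2] := key [0,3] [] [2,2] [] (bsq 2).symm
    _ = π [0,2,3,2] := key [0] [3,2] [2,3] [2] (pr 2 3).symm

theorem ceq_3_1 : π [3,1] = π [3,1] := rfl

theorem ceq_3_2 : π [3,2] = π [0,2,3,0] := by
  calc π [3,2] = π [3,2] := rfl
    _ = π [2,3] := key [] [3,2] [2,3] [] (pr 2 3).symm
    _ = π [2,3,0,0] := key [2,3] [] [0,0] [] (bsq 0).symm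
    _ = π [2,0,3,0] := key [2] [3,0] [0,3] [0] (pr 0 3).symm
    _ = π [0,2,3,0] := key [] [2,0] [0,2] [3,0] (pr 0 2).symm

theorem ceq_3_3 : π [3,3] = π [] := by
  calc π [3,3] = π [3,3] := rfl
    _ = π [] := key [] [3,3] [] [] (bsq 3)

theorem ceq_4_0 : π [0,1,0] = π [1,0,1] := by
  calc π [0,1,0] = π [0,1,0] := rfl
    _ = π [1,0,1] := key [] [0,1,0] [1,0,1] [] (br 0 1)

theorem ceq_4_1 : π [0,1,1] = π [0] := by
  calc π [0,1,1] = π [0,1,1] := rfl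
    _ = π [0] := key [0] [1,1] [] [] (bsq 1)

theorem ceq_4_2 : π [0,1,2] = π [0,1,2] := rfl

theorem ceq_4_3 : π [0,1,3] = π [0,1,3] := rfl

theorem ceq_5_0 : π [2,1,0] = π [2,1,0] := rfl

theorem ceq_5_1 : π [2,1,1] = π [2] := by
  calc π [2,1,1] = π [2,1,1] := rfl
    _ = π [2] := key [2] [1,1] [] [] (bsq 1)

theorem ceq_5_2 : π [2,1,2] = π [1,2,1] := by
  calc π [2,1,2] = π [2,1,2] := rfl
    _ = π [1,2,1] := key [] [2,1,2] [1,2,1] [] (br 2 1)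

theorem ceq_5_3 : π [2,1,3] = π [2,1,3] := rfl

theorem ceq_6_0 : π [3,1,0] = π [3,1,0] := rfl

theorem ceq_6_1 : π [3,1,1] = π [3] := by
  calc π [3,1,1] = π [3,1,1] := rfl
    _ = π [3] := key [3] [1,1] [] [] (bsq 1)

theorem ceq_6_2 : π [3,1,2] = π [3,1,2] := rfl

theorem ceq_6_3 : π [3,1,3] = π [1,3,1] := by
  calc π [3,1,3] = π [3,1,3] := rfl
    _ = π [1,3,1] := key [] [3,1,3] [1,3,1] [] (br 3 1)

theorem ceq_7_0 : π [0,1,2,0] = π [1,0,1,2] := by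
  calc π [0,1,2,0] = π [0,1,2,0] := rfl
    _ = π [0,1,0,2] := key [0,1] [2,0] [0,2] [] (pr 2 0)
    _ = π [1,0,1,2] := key [] [0,1,0] [1,0,1] [2] (br 0 1)

theorem ceq_7_1 : π [0,1,2,1] = π [0,2,3,3,1,2] := by
  calc π [0,1,2,1] = π [0,1,2,1] := rfl
    _ = π [0,2,1,2] := key [0] [1,2,1] [2,1,2] [] (br 2 1).symm
    _ = π [0,2,3,3,1,2] := key [0,2] [] [3,3] [1,2] (bsq 3).symm

theorem ceq_7_2 : π [0,1,2,2] = π [0,1] := by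
  calc π [0,1,2,2] = π [0,1,2,2] := rfl
    _ = π [0,1] := key [0,1] [2,2] [] [] (bsq 2)

theorem ceq_7_3 : π [0,1,2,3] = π [0,1,2,3] := rfl

theorem ceq_8_0 : π [0,1,3,0] = π [1,0,1,3] := by
  calc π [0,1,3,0] = π [0,1,3,0] := rfl
    _ = π [0,1,0,3] := key [0,1] [3,0] [0,3] [] (pr 3 0)
    _ = π [1,0,1,3] := key [] [0,1,0] [1,0,1] [3] (br 0 1)

theorem ceq_8_1 : π [0,1,3,1] = π [0,2,3,2,1,3] := by
  calc π [0,1,3,1] = π [0,1,3,1] := rfl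
    _ = π [0,3,1,3] := key [0] [1,3,1] [3,1,3] [] (br 3 1).symm
    _ = π [0,3,2,2,1,3] := key [0,3] [] [2,2] [1,3] (bsq 2).symm
    _ = π [0,2,3,2,1,3] := key [0] [3,2] [2,3] [2,1,3] (pr 2 3).symm

theorem ceq_8_2 : π [0,1,3,2] = π [0,1,2,3] := by
  calc π [0,1,3,2] = π [0,1,3,2] := rfl
    _ = π [0,1,2,3] := key [0,1] [3,2] [2,3] [] (pr 3 2)

theorem ceq_8_3 : π [0,1,3,3] = π [0,1] := by
  calc π [0,1,3,3] = π [0,1,3,3] := rfl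
    _ = π [0,1] := key [0,1] [3,3] [] [] (bsq 3)

theorem ceq_9_0 : π [2,1,0,0] = π [2,1] := by
  calc π [2,1,0,0] = π [2,1,0,0] := rfl
    _ = π [2,1] := key [2,1] [0,0] [] [] (bsq 0)

theorem ceq_9_1 : π [2,1,0,1] = π [0,2,3,3,1,0] := by
  calc π [2,1,0,1] = π [2,1,0,1] := rfl
    _ = π [2,0,1,0] := key [2] [1,0,1] [0,1,0] [] (br 0 1).symm
    _ = π [0,2,1,0] := key [] [2,0] [0,2] [1,0] (pr 0 2).symm
    _ = π [0,2,3,3,1,0] := key [0,2] [] [3,3] [1,0] (bsq 3).symm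

theorem ceq_9_2 : π [2,1,0,2] = π [1,2,1,0] := by
  calc π [2,1,0,2] = π [2,1,0,2] := rfl
    _ = π [2,1,2,0] := key [2,1] [0,2] [2,0] [] (pr 0 2)
    _ = π [1,2,1,0] := key [] [2,1,2] [1,2,1] [0] (br 2 1)

theorem ceq_9_3 : π [2,1,0,3] = π [2,1,0,3] := rfl

theorem ceq_10_0 : π [2,1,3,0] = π [2,1,0,3] := by
  calc π [2,1,3,0] = π [2,1,3,0] := rfl
    _ = π [2,1,0,3] := key [2,1] [3,0] [0,3] [] (pr 3 0)

theorem ceq_10_1 : π [2,1,3,1] = π [0,2,3,0,1,3] := by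
  calc π [2,1,3,1] = π [2,1,3,1] := rfl
    _ = π [2,3,1,3] := key [2] [1,3,1] [3,1,3] [] (br 3 1).symm
    _ = π [2,3,0,0,1,3] := key [2,3] [] [0,0] [1,3] (bsq 0).symm
    _ = π [2,0,3,0,1,3] := key [2] [3,0] [0,3] [0,1,3] (pr 0 3).symm
    _ = π [0,2,3,0,1,3] := key [] [2,0] [0,2] [3,0,1,3] (pr 0 2).symm

theorem ceq_10_2 : π [2,1,3,2] = π [1,2,1,3] := by
  calc π [2,1,3,2] = π [2,1,3,2] := rfl
    _ = π [2,1,2,3] := key [2,1] [3,2] [2,3] [] (pr 3 2)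
    _ = π [1,2,1,3] := key [] [2,1,2] [1,2,1] [3] (br 2 1)

theorem ceq_10_3 : π [2,1,3,3] = π [2,1] := by
  calc π [2,1,3,3] = π [2,1,3,3] := rfl
    _ = π [2,1] := key [2,1] [3,3] [] [] (bsq 3)

theorem ceq_11_0 : π [3,1,0,0] = π [3,1] := by
  calc π [3,1,0,0] = π [3,1,0,0] := rfl
    _ = π [3,1] := key [3,1] [0,0] [] [] (bsq 0)

theorem ceq_11_1 : π [3,1,0,1] = π [0,2,3,2,1,0] := by
  calc π [3,1,0,1] = π [3,1,0,1] := rfl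
    _ = π [3,0,1,0] := key [3] [1,0,1] [0,1,0] [] (br 0 1).symm
    _ = π [0,3,1,0] := key [] [3,0] [0,3] [1,0] (pr 0 3).symm
    _ = π [0,3,2,2,1,0] := key [0,3] [] [2,2] [1,0] (bsq 2).symm
    _ = π [0,2,3,2,1,0] := key [0] [3,2] [2,3] [2,1,0] (pr 2 3).symm

theorem ceq_11_2 : π [3,1,0,2] = π [3,1,0,2] := rfl

theorem ceq_11_3 : π [3,1,0,3] = π [1,3,1,0] := by
  calc π [3,1,0,3] = π [3,1,0,3] := rfl
    _ = π [3,1,3,0] := key [3,1] [0,3] [3,0] [] (pr 0 3)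
    _ = π [1,3,1,0] := key [] [3,1,3] [1,3,1] [0] (br 3 1)

theorem ceq_12_0 : π [3,1,2,0] = π [3,1,0,2] := by
  calc π [3,1,2,0] = π [3,1,2,0] := rfl
    _ = π [3,1,0,2] := key [3,1] [2,0] [0,2] [] (pr 2 0)

theorem ceq_12_1 : π [3,1,2,1] = π [0,2,3,0,1,2] := by
  calc π [3,1,2,1] = π [3,1,2,1] := rfl
    _ = π [3,2,1,2] := key [3] [1,2,1] [2,1,2] [] (br 2 1).symm
    _ = π [2,3,1,2] := key [] [3,2] [2,3] [1,2] (pr 2 3).symm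
    _ = π [2,3,0,0,1,2] := key [2,3] [] [0,0] [1,2] (bsq 0).symm
    _ = π [2,0,3,0,1,2] := key [2] [3,0] [0,3] [0,1,2] (pr 0 3).symm
    _ = π [0,2,3,0,1,2] := key [] [2,0] [0,2] [3,0,1,2] (pr 0 2).symm

theorem ceq_12_2 : π [3,1,2,2] = π [3,1] := by
  calc π [3,1,2,2] = π [3,1,2,2] := rfl
    _ = π [3,1] := key [3,1] [2,2] [] [] (bsq 2)

theorem ceq_12_3 : π [3,1,2,3] = π [1,3,1,2] := by
  calc π [3,1,2,3] = π [3,1,2,3] := rfl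
    _ = π [3,1,3,2] := key [3,1] [2,3] [3,2] [] (pr 2 3)
    _ = π [1,3,1,2] := key [] [3,1,3] [1,3,1] [2] (br 3 1)

theorem ceq_13_0 : π [0,1,2,3,0] = π [1,0,1,2,3] := by
  calc π [0,1,2,3,0] = π [0,1,2,3,0] := rfl
    _ = π [0,1,2,0,3] := key [0,1,2] [3,0] [0,3] [] (pr 3 0)
    _ = π [0,1,0,2,3] := key [0,1] [2,0] [0,2] [3] (pr 2 0)
    _ = π [1,0,1,2,3] := key [] [0,1,0] [1,0,1] [2,3] (br 0 1)

theorem ceq_13_1 : π [0,1,2,3,1] = π [0,2,3,1,0,2,3,0,1,2,3] := by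
  calc π [0,1,2,3,1] = π [0,1,2,3,1] := rfl
    _ = π [0,1,2,3,1,3,3] := key [0,1,2,3,1] [] [3,3] [] (bsq 3).symm
    _ = π [0,1,2,1,3,1,3] := key [0,1,2] [3,1,3] [1,3,1] [3] (br 1 3).symm
    _ = π [0,2,1,2,3,1,3] := key [0] [1,2,1] [2,1,2] [3,1,3] (br 2 1).symm
    _ = π [0,2,1,3,2,1,3] := key [0,2,1] [2,3] [3,2] [1,3] (pr 3 2).symm
    _ = π [0,2,1,3,2,1,2,2,3] := key [0,2,1,3,2,1] [] [2,2] [3] (bsq 2).symm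
    _ = π [0,2,1,3,1,2,1,2,3] := key [0,2,1,3] [2,1,2] [1,2,1] [2,3] (br 1 2).symm
    _ = π [0,2,3,1,3,2,1,2,3] := key [0,2] [1,3,1] [3,1,3] [2,1,2,3] (br 3 1).symm
    _ = π [0,2,3,1,2,3,1,2,3] := key [0,2,3,1] [3,2] [2,3] [1,2,3] (pr 2 3).symm
    _ = π [0,2,3,1,2,3,0,0,1,2,3] := key [0,2,3,1,2,3] [] [0,0] [1,2,3] (bsq 0).symm
    _ = π [0,2,3,1,2,0,3,0,1,2,3] := key [0,2,3,1,2] [3,0] [0,3] [0,1,2,3] (pr 0 3).symm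
    _ = π [0,2,3,1,0,2,3,0,1,2,3] := key [0,2,3,1] [2,0] [0,2] [3,0,1,2,3] (pr 0 2).symm

theorem ceq_13_2 : π [0,1,2,3,2] = π [0,1,3] := by
  calc π [0,1,2,3,2] = π [0,1,2,3,2] := rfl
    _ = π [0,1,3,2,2] := key [0,1] [2,3] [3,2] [2] (pr 2 3)
    _ = π [0,1,3] := key [0,1,3] [2,2] [] [] (bsq 2)

theorem ceq_13_3 : π [0,1,2,3,3] = π [0,1,2] := by
  calc π [0,1,2,3,3] = π [0,1,2,3,3] := rfl
    _ = π [0,1,2] := key [0,1,2] [3,3] [] [] (bsq 3)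

theorem ceq_14_0 : π [2,1,0,3,0] = π [2,1,3] := by
  calc π [2,1,0,3,0] = π [2,1,0,3,0] := rfl
    _ = π [2,1,3,0,0] := key [2,1] [0,3] [3,0] [0] (pr 0 3)
    _ = π [2,1,3] := key [2,1,3] [0,0] [] [] (bsq 0)

theorem ceq_14_1 : π [2,1,0,3,1] = π [0,2,3,1,0,2,3,2,1,0,3] := by
  calc π [2,1,0,3,1] = π [2,1,0,3,1] := rfl
    _ = π [2,1,0,3,1,3,3] := key [2,1,0,3,1] [] [3,3] [] (bsq 3).symm
    _ = π [2,1,0,1,3,1,3] := key [2,1,0] [3,1,3] [1,3,1] [3] (br 1 3).symm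
    _ = π [2,0,1,0,3,1,3] := key [2] [1,0,1] [0,1,0] [3,1,3] (br 0 1).symm
    _ = π [2,0,1,3,0,1,3] := key [2,0,1] [0,3] [3,0] [1,3] (pr 3 0).symm
    _ = π [0,2,1,3,0,1,3] := key [] [2,0] [0,2] [1,3,0,1,3] (pr 0 2).symm
    _ = π [0,2,1,3,0,1,0,0,3] := key [0,2,1,3,0,1] [] [0,0] [3] (bsq 0).symm
    _ = π [0,2,1,3,1,0,1,0,3] := key [0,2,1,3] [0,1,0] [1,0,1] [0,3] (br 1 0).symm
    _ = π [0,2,3,1,3,0,1,0,3] := key [0,2] [1,3,1] [3,1,3] [0,1,0,3] (br 3 1).symm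
    _ = π [0,2,3,1,0,3,1,0,3] := key [0,2,3,1] [3,0] [0,3] [1,0,3] (pr 0 3).symm
    _ = π [0,2,3,1,0,3,2,2,1,0,3] := key [0,2,3,1,0,3] [] [2,2] [1,0,3] (bsq 2).symm
    _ = π [0,2,3,1,0,2,3,2,1,0,3] := key [0,2,3,1,0] [3,2] [2,3] [2,1,0,3] (pr 2 3).symm

theorem ceq_14_2 : π [2,1,0,3,2] = π [1,2,1,0,3] := by
  calc π [2,1,0,3,2] = π [2,1,0,3,2] := rfl
    _ = π [2,1,0,2,3] := key [2,1,0] [3,2] [2,3] [] (pr 3 2)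
    _ = π [2,1,2,0,3] := key [2,1] [0,2] [2,0] [3] (pr 0 2)
    _ = π [1,2,1,0,3] := key [] [2,1,2] [1,2,1] [0,3] (br 2 1)

theorem ceq_14_3 : π [2,1,0,3,3] = π [2,1,0] := by
  calc π [2,1,0,3,3] = π [2,1,0,3,3] := rfl
    _ = π [2,1,0] := key [2,1,0] [3,3] [] [] (bsq 3)

theorem ceq_15_0 : π [3,1,0,2,0] = π [3,1,2] := by
  calc π [3,1,0,2,0] = π [3,1,0,2,0] := rfl
    _ = π [3,1,2,0,0] := key [3,1] [0,2] [2,0] [0] (pr 0 2)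
    _ = π [3,1,2] := key [3,1,2] [0,0] [] [] (bsq 0)

theorem ceq_15_1 : π [3,1,0,2,1] = π [0,2,3,1,0,2,3,3,1,0,2] := by
  calc π [3,1,0,2,1] = π [3,1,0,2,1] := rfl
    _ = π [3,1,0,2,1,2,2] := key [3,1,0,2,1] [] [2,2] [] (bsq 2).symm
    _ = π [3,1,0,1,2,1,2] := key [3,1,0] [2,1,2] [1,2,1] [2] (br 1 2).symm
    _ = π [3,0,1,0,2,1,2] := key [3] [1,0,1] [0,1,0] [2,1,2] (br 0 1).symm
    _ = π [3,0,1,2,0,1,2] := key [3,0,1] [0,2] [2,0] [1,2] (pr 2 0).symm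
    _ = π [0,3,1,2,0,1,2] := key [] [3,0] [0,3] [1,2,0,1,2] (pr 0 3).symm
    _ = π [0,3,1,2,0,1,0,0,2] := key [0,3,1,2,0,1] [] [0,0] [2] (bsq 0).symm
    _ = π [0,3,1,2,1,0,1,0,2] := key [0,3,1,2] [0,1,0] [1,0,1] [0,2] (br 1 0).symm
    _ = π [0,3,2,1,2,0,1,0,2] := key [0,3] [1,2,1] [2,1,2] [0,1,0,2] (br 2 1).symm
    _ = π [0,3,2,1,0,2,1,0,2] := key [0,3,2,1] [2,0] [0,2] [1,0,2] (pr 0 2).symm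
    _ = π [0,2,3,1,0,2,1,0,2] := key [0] [3,2] [2,3] [1,0,2,1,0,2] (pr 2 3).symm
    _ = π [0,2,3,1,0,2,3,3,1,0,2] := key [0,2,3,1,0,2] [] [3,3] [1,0,2] (bsq 3).symm

theorem ceq_15_2 : π [3,1,0,2,2] = π [3,1,0] := by
  calc π [3,1,0,2,2] = π [3,1,0,2,2] := rfl
    _ = π [3,1,0] := key [3,1,0] [2,2] [] [] (bsq 2)

theorem ceq_15_3 : π [3,1,0,2,3] = π [1,3,1,0,2] := by
  calc π [3,1,0,2,3] = π [3,1,0,2,3] := rfl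
    _ = π [3,1,0,3,2] := key [3,1,0] [2,3] [3,2] [] (pr 2 3)
    _ = π [3,1,3,0,2] := key [3,1] [0,3] [3,0] [2] (pr 0 3)
    _ = π [1,3,1,0,2] := key [] [3,1,3] [1,3,1] [0,2] (br 3 1)

theorem eqBB : π [0,2,3,0,2,3] = π [] := by
  calc π [0,2,3,0,2,3] = π [0,2,3,0,2,3] := rfl
    _ = π [2,0,3,0,2,3] := key [] [0,2] [2,0] [3,0,2,3] (pr 0 2)
    _ = π [2,3,0,0,2,3] := key [2] [0,3] [3,0] [0,2,3] (pr 0 3)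
    _ = π [2,3,2,3] := key [2,3] [0,0] [] [2,3] (bsq 0)
    _ = π [3,2,2,3] := key [] [2,3] [3,2] [2,3] (pr 2 3)
    _ = π [3,3] := key [3] [2,2] [] [3] (bsq 2)
    _ = π [] := key [] [3,3] [] [] (bsq 3)

theorem eqAB6 : π [1,0,2,3,1,0,2,3,1,0,2,3,1,0,2,3,1,0,2,3,1,0,2,3] = π [] := by
  calc π [1,0,2,3,1,0,2,3,1,0,2,3,1,0,2,3,1,0,2,3,1,0,2,3] = π [1,0,2,3,1,0,2,3,1,0,2,3,1,0,2,3,1,0,2,3,1,0,2,3] := rfl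
    _ = π [1,2,0,3,1,0,2,3,1,0,2,3,1,0,2,3,1,0,2,3,1,0,2,3] := key [1] [0,2] [2,0] [3,1,0,2,3,1,0,2,3,1,0,2,3,1,0,2,3,1,0,2,3] (pr 0 2)
    _ = π [1,2,3,0,1,0,2,3,1,0,2,3,1,0,2,3,1,0,2,3,1,0,2,3] := key [1,2] [0,3] [3,0] [1,0,2,3,1,0,2,3,1,0,2,3,1,0,2,3,1,0,2,3] (pr 0 3)
    _ = π [1,2,3,0,1,0,3,2,1,0,2,3,1,0,2,3,1,0,2,3,1,0,2,3] := key [1,2,3,0,1,0] [2,3] [3,2] [1,0,2,3,1,0,2,3,1,0,2,3,1,0,2,3] (pr 2 3)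
    _ = π [1,2,3,0,1,0,3,2,1,2,0,3,1,0,2,3,1,0,2,3,1,0,2,3] := key [1,2,3,0,1,0,3,2,1] [0,2] [2,0] [3,1,0,2,3,1,0,2,3,1,0,2,3] (pr 0 2)
    _ = π [1,2,3,0,1,0,3,2,1,2,3,0,1,0,2,3,1,0,2,3,1,0,2,3] := key [1,2,3,0,1,0,3,2,1,2] [0,3] [3,0] [1,0,2,3,1,0,2,3,1,0,2,3] (pr 0 3)
    _ = π [1,2,3,1,0,1,3,2,1,2,3,0,1,0,2,3,1,0,2,3,1,0,2,3] := key [1,2,3] [0,1,0] [1,0,1] [3,2,1,2,3,0,1,0,2,3,1,0,2,3,1,0,2,3] (br 0 1)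
    _ = π [1,2,3,1,0,1,3,1,2,1,3,0,1,0,2,3,1,0,2,3,1,0,2,3] := key [1,2,3,1,0,1,3] [2,1,2] [1,2,1] [3,0,1,0,2,3,1,0,2,3,1,0,2,3] (br 2 1)
    _ = π [1,2,3,1,0,3,1,3,2,1,3,0,1,0,2,3,1,0,2,3,1,0,2,3] := key [1,2,3,1,0] [1,3,1] [3,1,3] [2,1,3,0,1,0,2,3,1,0,2,3,1,0,2,3] (br 1 3)
    _ = π [1,2,3,1,0,3,1,2,3,1,3,0,1,0,2,3,1,0,2,3,1,0,2,3] := key [1,2,3,1,0,3,1] [3,2] [2,3] [1,3,0,1,0,2,3,1,0,2,3,1,0,2,3] (pr 3 2)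
    _ = π [1,2,3,1,0,3,1,2,1,3,1,0,1,0,2,3,1,0,2,3,1,0,2,3] := key [1,2,3,1,0,3,1,2] [3,1,3] [1,3,1] [0,1,0,2,3,1,0,2,3,1,0,2,3] (br 3 1)
    _ = π [1,2,3,1,0,3,1,2,1,3,0,1,0,0,2,3,1,0,2,3,1,0,2,3] := key [1,2,3,1,0,3,1,2,1,3] [1,0,1] [0,1,0] [0,2,3,1,0,2,3,1,0,2,3] (br 1 0)
    _ = π [1,2,3,1,0,3,1,2,1,3,0,1,2,3,1,0,2,3,1,0,2,3] := key [1,2,3,1,0,3,1,2,1,3,0,1] [0,0] [] [2,3,1,0,2,3,1,0,2,3] (bsq 0)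
    _ = π [1,2,3,1,0,3,1,2,1,0,3,1,2,3,1,0,2,3,1,0,2,3] := key [1,2,3,1,0,3,1,2,1] [3,0] [0,3] [1,2,3,1,0,2,3,1,0,2,3] (pr 3 0)
    _ = π [1,2,3,1,0,3,1,2,1,0,3,1,3,2,1,0,2,3,1,0,2,3] := key [1,2,3,1,0,3,1,2,1,0,3,1] [2,3] [3,2] [1,0,2,3,1,0,2,3] (pr 2 3)
    _ = π [1,2,3,1,0,3,1,2,1,0,3,1,3,2,1,2,0,3,1,0,2,3] := key [1,2,3,1,0,3,1,2,1,0,3,1,3,2,1] [0,2] [2,0] [3,1,0,2,3] (pr 0 2)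
    _ = π [1,2,3,1,0,3,1,2,1,0,1,3,1,2,1,2,0,3,1,0,2,3] := key [1,2,3,1,0,3,1,2,1,0] [3,1,3] [1,3,1] [2,1,2,0,3,1,0,2,3] (br 3 1)
    _ = π [1,2,3,1,0,3,1,2,1,0,1,3,2,1,2,2,0,3,1,0,2,3] := key [1,2,3,1,0,3,1,2,1,0,1,3] [1,2,1] [2,1,2] [2,0,3,1,0,2,3] (br 1 2)
    _ = π [1,2,3,1,0,3,1,2,1,0,1,3,2,1,0,3,1,0,2,3] := key [1,2,3,1,0,3,1,2,1,0,1,3,2,1] [2,2] [] [0,3,1,0,2,3] (bsq 2)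
    _ = π [1,2,3,1,0,3,1,2,1,0,1,2,3,1,0,3,1,0,2,3] := key [1,2,3,1,0,3,1,2,1,0,1] [3,2] [2,3] [1,0,3,1,0,2,3] (pr 3 2)
    _ = π [1,2,3,1,0,3,1,2,1,0,1,2,3,1,3,0,1,0,2,3] := key [1,2,3,1,0,3,1,2,1,0,1,2,3,1] [0,3] [3,0] [1,0,2,3] (pr 0 3)
    _ = π [1,2,3,1,0,3,1,2,1,0,1,2,1,3,1,0,1,0,2,3] := key [1,2,3,1,0,3,1,2,1,0,1,2] [3,1,3] [1,3,1] [0,1,0,2,3] (br 3 1)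
    _ = π [1,2,3,1,0,3,1,2,1,0,1,2,1,3,0,1,0,0,2,3] := key [1,2,3,1,0,3,1,2,1,0,1,2,1,3] [1,0,1] [0,1,0] [0,2,3] (br 1 0)
    _ = π [1,2,3,1,0,3,1,2,1,0,1,2,1,3,0,1,2,3] := key [1,2,3,1,0,3,1,2,1,0,1,2,1,3,0,1] [0,0] [] [2,3] (bsq 0)
    _ = π [1,2,3,1,0,3,2,1,2,0,1,2,1,3,0,1,2,3] := key [1,2,3,1,0,3] [1,2,1] [2,1,2] [0,1,2,1,3,0,1,2,3] (br 1 2)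
    _ = π [1,2,3,1,0,3,2,1,0,2,1,2,1,3,0,1,2,3] := key [1,2,3,1,0,3,2,1] [2,0] [0,2] [1,2,1,3,0,1,2,3] (pr 2 0)
    _ = π [1,2,3,1,0,3,2,1,0,1,2,1,1,3,0,1,2,3] := key [1,2,3,1,0,3,2,1,0] [2,1,2] [1,2,1] [1,3,0,1,2,3] (br 2 1)
    _ = π [1,2,3,1,0,3,2,1,0,1,2,3,0,1,2,3] := key [1,2,3,1,0,3,2,1,0,1,2] [1,1] [] [3,0,1,2,3] (bsq 1)
    _ = π [1,2,3,1,3,0,2,1,0,1,2,3,0,1,2,3] := key [1,2,3,1] [0,3] [3,0] [2,1,0,1,2,3,0,1,2,3] (pr 0 3)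
    _ = π [1,2,3,1,3,2,0,1,0,1,2,3,0,1,2,3] := key [1,2,3,1,3] [0,2] [2,0] [1,0,1,2,3,0,1,2,3] (pr 0 2)
    _ = π [1,2,3,1,3,2,1,0,1,1,2,3,0,1,2,3] := key [1,2,3,1,3,2] [0,1,0] [1,0,1] [1,2,3,0,1,2,3] (br 0 1)
    _ = π [1,2,3,1,3,2,1,0,2,3,0,1,2,3] := key [1,2,3,1,3,2,1,0] [1,1] [] [2,3,0,1,2,3] (bsq 1)
    _ = π [1,2,3,1,3,2,1,2,0,3,0,1,2,3] := key [1,2,3,1,3,2,1] [0,2] [2,0] [3,0,1,2,3] (pr 0 2)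
    _ = π [1,2,3,1,3,2,1,2,3,0,0,1,2,3] := key [1,2,3,1,3,2,1,2] [0,3] [3,0] [0,1,2,3] (pr 0 3)
    _ = π [1,2,3,1,3,2,1,2,3,1,2,3] := key [1,2,3,1,3,2,1,2,3] [0,0] [] [1,2,3] (bsq 0)
    _ = π [1,2,1,3,1,2,1,2,3,1,2,3] := key [1,2] [3,1,3] [1,3,1] [2,1,2,3,1,2,3] (br 3 1)
    _ = π [1,2,1,3,2,1,2,2,3,1,2,3] := key [1,2,1,3] [1,2,1] [2,1,2] [2,3,1,2,3] (br 1 2)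
    _ = π [1,2,1,3,2,1,3,1,2,3] := key [1,2,1,3,2,1] [2,2] [] [3,1,2,3] (bsq 2)
    _ = π [1,2,1,2,3,1,3,1,2,3] := key [1,2,1] [3,2] [2,3] [1,3,1,2,3] (pr 3 2)
    _ = π [2,1,2,2,3,1,3,1,2,3] := key [] [1,2,1] [2,1,2] [2,3,1,3,1,2,3] (br 1 2)
    _ = π [2,1,3,1,3,1,2,3] := key [2,1] [2,2] [] [3,1,3,1,2,3] (bsq 2)
    _ = π [2,3,1,3,3,1,2,3] := key [2] [1,3,1] [3,1,3] [3,1,2,3] (br 1 3)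
    _ = π [2,3,1,1,2,3] := key [2,3,1] [3,3] [] [1,2,3] (bsq 3)
    _ = π [2,3,2,3] := key [2,3] [1,1] [] [2,3] (bsq 1)
    _ = π [3,2,2,3] := key [] [2,3] [3,2] [2,3] (pr 2 3)
    _ = π [3,3] := key [3] [2,2] [] [3] (bsq 2)
    _ = π [] := key [] [3,3] [] [] (bsq 3)

theorem eqBA6 : π [0,2,3,1,0,2,3,1,0,2,3,1,0,2,3,1,0,2,3,1,0,2,3,1] = π [] := by
  calc π [0,2,3,1,0,2,3,1,0,2,3,1,0,2,3,1,0,2,3,1,0,2,3,1] = π [0,2,3,1,0,2,3,1,0,2,3,1,0,2,3,1,0,2,3,1,0,2,3,1] := rfl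
    _ = π [2,0,3,1,0,2,3,1,0,2,3,1,0,2,3,1,0,2,3,1,0,2,3,1] := key [] [0,2] [2,0] [3,1,0,2,3,1,0,2,3,1,0,2,3,1,0,2,3,1,0,2,3,1] (pr 0 2)
    _ = π [2,3,0,1,0,2,3,1,0,2,3,1,0,2,3,1,0,2,3,1,0,2,3,1] := key [2] [0,3] [3,0] [1,0,2,3,1,0,2,3,1,0,2,3,1,0,2,3,1,0,2,3,1] (pr 0 3)
    _ = π [2,3,0,1,0,3,2,1,0,2,3,1,0,2,3,1,0,2,3,1,0,2,3,1] := key [2,3,0,1,0] [2,3] [3,2] [1,0,2,3,1,0,2,3,1,0,2,3,1,0,2,3,1] (pr 2 3)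
    _ = π [2,3,0,1,0,3,2,1,2,0,3,1,0,2,3,1,0,2,3,1,0,2,3,1] := key [2,3,0,1,0,3,2,1] [0,2] [2,0] [3,1,0,2,3,1,0,2,3,1,0,2,3,1] (pr 0 2)
    _ = π [2,3,0,1,0,3,2,1,2,3,0,1,0,2,3,1,0,2,3,1,0,2,3,1] := key [2,3,0,1,0,3,2,1,2] [0,3] [3,0] [1,0,2,3,1,0,2,3,1,0,2,3,1] (pr 0 3)
    _ = π [2,3,1,0,1,3,2,1,2,3,0,1,0,2,3,1,0,2,3,1,0,2,3,1] := key [2,3] [0,1,0] [1,0,1] [3,2,1,2,3,0,1,0,2,3,1,0,2,3,1,0,2,3,1] (br 0 1)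
    _ = π [2,3,1,0,1,3,1,2,1,3,0,1,0,2,3,1,0,2,3,1,0,2,3,1] := key [2,3,1,0,1,3] [2,1,2] [1,2,1] [3,0,1,0,2,3,1,0,2,3,1,0,2,3,1] (br 2 1)
    _ = π [2,3,1,0,3,1,3,2,1,3,0,1,0,2,3,1,0,2,3,1,0,2,3,1] := key [2,3,1,0] [1,3,1] [3,1,3] [2,1,3,0,1,0,2,3,1,0,2,3,1,0,2,3,1] (br 1 3)
    _ = π [2,3,1,0,3,1,2,3,1,3,0,1,0,2,3,1,0,2,3,1,0,2,3,1] := key [2,3,1,0,3,1] [3,2] [2,3] [1,3,0,1,0,2,3,1,0,2,3,1,0,2,3,1] (pr 3 2)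
    _ = π [2,3,1,0,3,1,2,1,3,1,0,1,0,2,3,1,0,2,3,1,0,2,3,1] := key [2,3,1,0,3,1,2] [3,1,3] [1,3,1] [0,1,0,2,3,1,0,2,3,1,0,2,3,1] (br 3 1)
    _ = π [2,3,1,0,3,1,2,1,3,0,1,0,0,2,3,1,0,2,3,1,0,2,3,1] := key [2,3,1,0,3,1,2,1,3] [1,0,1] [0,1,0] [0,2,3,1,0,2,3,1,0,2,3,1] (br 1 0)
    _ = π [2,3,1,0,3,1,2,1,3,0,1,2,3,1,0,2,3,1,0,2,3,1] := key [2,3,1,0,3,1,2,1,3,0,1] [0,0] [] [2,3,1,0,2,3,1,0,2,3,1] (bsq 0)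
    _ = π [2,3,1,0,3,1,2,1,0,3,1,2,3,1,0,2,3,1,0,2,3,1] := key [2,3,1,0,3,1,2,1] [3,0] [0,3] [1,2,3,1,0,2,3,1,0,2,3,1] (pr 3 0)
    _ = π [2,3,1,0,3,1,2,1,0,3,1,3,2,1,0,2,3,1,0,2,3,1] := key [2,3,1,0,3,1,2,1,0,3,1] [2,3] [3,2] [1,0,2,3,1,0,2,3,1] (pr 2 3)
    _ = π [2,3,1,0,3,1,2,1,0,3,1,3,2,1,2,0,3,1,0,2,3,1] := key [2,3,1,0,3,1,2,1,0,3,1,3,2,1] [0,2] [2,0] [3,1,0,2,3,1] (pr 0 2)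
    _ = π [2,3,1,0,3,1,2,1,0,1,3,1,2,1,2,0,3,1,0,2,3,1] := key [2,3,1,0,3,1,2,1,0] [3,1,3] [1,3,1] [2,1,2,0,3,1,0,2,3,1] (br 3 1)
    _ = π [2,3,1,0,3,1,2,1,0,1,3,2,1,2,2,0,3,1,0,2,3,1] := key [2,3,1,0,3,1,2,1,0,1,3] [1,2,1] [2,1,2] [2,0,3,1,0,2,3,1] (br 1 2)
    _ = π [2,3,1,0,3,1,2,1,0,1,3,2,1,0,3,1,0,2,3,1] := key [2,3,1,0,3,1,2,1,0,1,3,2,1] [2,2] [] [0,3,1,0,2,3,1] (bsq 2)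
    _ = π [2,3,1,0,3,1,2,1,0,1,2,3,1,0,3,1,0,2,3,1] := key [2,3,1,0,3,1,2,1,0,1] [3,2] [2,3] [1,0,3,1,0,2,3,1] (pr 3 2)
    _ = π [2,3,1,0,3,1,2,1,0,1,2,3,1,3,0,1,0,2,3,1] := key [2,3,1,0,3,1,2,1,0,1,2,3,1] [0,3] [3,0] [1,0,2,3,1] (pr 0 3)
    _ = π [2,3,1,0,3,1,2,1,0,1,2,1,3,1,0,1,0,2,3,1] := key [2,3,1,0,3,1,2,1,0,1,2] [3,1,3] [1,3,1] [0,1,0,2,3,1] (br 3 1)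
    _ = π [2,3,1,0,3,1,2,1,0,1,2,1,3,0,1,0,0,2,3,1] := key [2,3,1,0,3,1,2,1,0,1,2,1,3] [1,0,1] [0,1,0] [0,2,3,1] (br 1 0)
    _ = π [2,3,1,0,3,1,2,1,0,1,2,1,3,0,1,2,3,1] := key [2,3,1,0,3,1,2,1,0,1,2,1,3,0,1] [0,0] [] [2,3,1] (bsq 0)
    _ = π [2,3,1,0,3,2,1,2,0,1,2,1,3,0,1,2,3,1] := key [2,3,1,0,3] [1,2,1] [2,1,2] [0,1,2,1,3,0,1,2,3,1] (br 1 2)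
    _ = π [2,3,1,0,3,2,1,0,2,1,2,1,3,0,1,2,3,1] := key [2,3,1,0,3,2,1] [2,0] [0,2] [1,2,1,3,0,1,2,3,1] (pr 2 0)
    _ = π [2,3,1,0,3,2,1,0,1,2,1,1,3,0,1,2,3,1] := key [2,3,1,0,3,2,1,0] [2,1,2] [1,2,1] [1,3,0,1,2,3,1] (br 2 1)
    _ = π [2,3,1,0,3,2,1,0,1,2,3,0,1,2,3,1] := key [2,3,1,0,3,2,1,0,1,2] [1,1] [] [3,0,1,2,3,1] (bsq 1)
    _ = π [2,3,1,3,0,2,1,0,1,2,3,0,1,2,3,1] := key [2,3,1] [0,3] [3,0] [2,1,0,1,2,3,0,1,2,3,1] (pr 0 3)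
    _ = π [2,3,1,3,2,0,1,0,1,2,3,0,1,2,3,1] := key [2,3,1,3] [0,2] [2,0] [1,0,1,2,3,0,1,2,3,1] (pr 0 2)
    _ = π [2,3,1,3,2,1,0,1,1,2,3,0,1,2,3,1] := key [2,3,1,3,2] [0,1,0] [1,0,1] [1,2,3,0,1,2,3,1] (br 0 1)
    _ = π [2,3,1,3,2,1,0,2,3,0,1,2,3,1] := key [2,3,1,3,2,1,0] [1,1] [] [2,3,0,1,2,3,1] (bsq 1)
    _ = π [2,3,1,3,2,1,2,0,3,0,1,2,3,1] := key [2,3,1,3,2,1] [0,2] [2,0] [3,0,1,2,3,1] (pr 0 2)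
    _ = π [2,3,1,3,2,1,2,3,0,0,1,2,3,1] := key [2,3,1,3,2,1,2] [0,3] [3,0] [0,1,2,3,1] (pr 0 3)
    _ = π [2,3,1,3,2,1,2,3,1,2,3,1] := key [2,3,1,3,2,1,2,3] [0,0] [] [1,2,3,1] (bsq 0)
    _ = π [2,1,3,1,2,1,2,3,1,2,3,1] := key [2] [3,1,3] [1,3,1] [2,1,2,3,1,2,3,1] (br 3 1)
    _ = π [2,1,3,2,1,2,2,3,1,2,3,1] := key [2,1,3] [1,2,1] [2,1,2] [2,3,1,2,3,1] (br 1 2)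
    _ = π [2,1,3,2,1,3,1,2,3,1] := key [2,1,3,2,1] [2,2] [] [3,1,2,3,1] (bsq 2)
    _ = π [2,1,2,3,1,3,1,2,3,1] := key [2,1] [3,2] [2,3] [1,3,1,2,3,1] (pr 3 2)
    _ = π [2,1,2,1,3,1,1,2,3,1] := key [2,1,2] [3,1,3] [1,3,1] [1,2,3,1] (br 3 1)
    _ = π [2,1,2,1,3,2,3,1] := key [2,1,2,1,3] [1,1] [] [2,3,1] (bsq 1)
    _ = π [2,1,2,1,2,3,3,1] := key [2,1,2,1] [3,2] [2,3] [3,1] (pr 3 2)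
    _ = π [2,1,2,1,2,1] := key [2,1,2,1,2] [3,3] [] [1] (bsq 3)
    _ = π [1,2,1,1,2,1] := key [] [2,1,2] [1,2,1] [1,2,1] (br 2 1)
    _ = π [1,2,2,1] := key [1,2] [1,1] [] [2,1] (bsq 1)
    _ = π [1,1] := key [1] [2,2] [] [1] (bsq 2)
    _ = π [] := key [] [1,1] [] [] (bsq 1)

theorem rgen : π [2,3,0] = π [0,2,3] := by
  calc π [2,3,0] = π [2,3,0] := rfl
    _ = π [2,0,3] := key [2] [3,0] [0,3] [] (pr 3 0)
    _ = π [0,2,3] := key [] [2,0] [0,2] [3] (pr 2 0)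

theorem tgen : π [2,0,3] = π [0,2,3] := by
  calc π [2,0,3] = π [2,0,3] := rfl
    _ = π [0,2,3] := key [] [2,0] [0,2] [3] (pr 2 0)

theorem mwG_0_0 : πG [0] = πG [0] := rfl

theorem stG_0_0 : πG [] * cs2.simple 0 = πG [0] := (cs2.wordProd_concat 0 []).symm.trans mwG_0_0

theorem mwG_0_1 : πG [1] = πG [1] := rfl

theorem stG_0_1 : πG [] * cs2.simple 1 = πG [1] := (cs2.wordProd_concat 1 []).symm.trans mwG_0_1

theorem mwG_1_0 : πG [0,0] = πG [] := by
  calc πG [0,0] = πG [0,0] := rfl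
    _ = πG [] := keyG [] [0,0] [] [] (bsqG 0)

theorem stG_1_0 : πG [0] * cs2.simple 0 = πG [] := (cs2.wordProd_concat 0 [0]).symm.trans mwG_1_0

theorem mwG_1_1 : πG [0,1] = πG [0,1] := rfl

theorem stG_1_1 : πG [0] * cs2.simple 1 = πG [0,1] := (cs2.wordProd_concat 1 [0]).symm.trans mwG_1_1

theorem mwG_2_0 : πG [1,0] = πG [1,0] := rfl

theorem stG_2_0 : πG [1] * cs2.simple 0 = πG [1,0] := (cs2.wordProd_concat 0 [1]).symm.trans mwG_2_0

theorem mwG_2_1 : πG [1,1] = πG [] := by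
  calc πG [1,1] = πG [1,1] := rfl
    _ = πG [] := keyG [] [1,1] [] [] (bsqG 1)

theorem stG_2_1 : πG [1] * cs2.simple 1 = πG [] := (cs2.wordProd_concat 1 [1]).symm.trans mwG_2_1

theorem mwG_3_0 : πG [0,1,0] = πG [0,1,0] := rfl

theorem stG_3_0 : πG [0,1] * cs2.simple 0 = πG [0,1,0] := (cs2.wordProd_concat 0 [0,1]).symm.trans mwG_3_0

theorem mwG_3_1 : πG [0,1,1] = πG [0] := by
  calc πG [0,1,1] = πG [0,1,1] := rfl
    _ = πG [0] := keyG [0] [1,1] [] [] (bsqG 1)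

theorem stG_3_1 : πG [0,1] * cs2.simple 1 = πG [0] := (cs2.wordProd_concat 1 [0,1]).symm.trans mwG_3_1

theorem mwG_4_0 : πG [1,0,0] = πG [1] := by
  calc πG [1,0,0] = πG [1,0,0] := rfl
    _ = πG [1] := keyG [1] [0,0] [] [] (bsqG 0)

theorem stG_4_0 : πG [1,0] * cs2.simple 0 = πG [1] := (cs2.wordProd_concat 0 [1,0]).symm.trans mwG_4_0

theorem mwG_4_1 : πG [1,0,1] = πG [1,0,1] := rfl

theorem stG_4_1 : πG [1,0] * cs2.simple 1 = πG [1,0,1] := (cs2.wordProd_concat 1 [1,0]).symm.trans mwG_4_1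

theorem mwG_5_0 : πG [0,1,0,0] = πG [0,1] := by
  calc πG [0,1,0,0] = πG [0,1,0,0] := rfl
    _ = πG [0,1] := keyG [0,1] [0,0] [] [] (bsqG 0)

theorem stG_5_0 : πG [0,1,0] * cs2.simple 0 = πG [0,1] := (cs2.wordProd_concat 0 [0,1,0]).symm.trans mwG_5_0

theorem mwG_5_1 : πG [0,1,0,1] = πG [0,1,0,1] := rfl

theorem stG_5_1 : πG [0,1,0] * cs2.simple 1 = πG [0,1,0,1] := (cs2.wordProd_concat 1 [0,1,0]).symm.trans mwG_5_1

theorem mwG_6_0 : πG [1,0,1,0] = πG [1,0,1,0] := rfl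

theorem stG_6_0 : πG [1,0,1] * cs2.simple 0 = πG [1,0,1,0] := (cs2.wordProd_concat 0 [1,0,1]).symm.trans mwG_6_0

theorem mwG_6_1 : πG [1,0,1,1] = πG [1,0] := by
  calc πG [1,0,1,1] = πG [1,0,1,1] := rfl
    _ = πG [1,0] := keyG [1,0] [1,1] [] [] (bsqG 1)

theorem stG_6_1 : πG [1,0,1] * cs2.simple 1 = πG [1,0] := (cs2.wordProd_concat 1 [1,0,1]).symm.trans mwG_6_1

theorem mwG_7_0 : πG [0,1,0,1,0] = πG [0,1,0,1,0] := rfl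

theorem stG_7_0 : πG [0,1,0,1] * cs2.simple 0 = πG [0,1,0,1,0] := (cs2.wordProd_concat 0 [0,1,0,1]).symm.trans mwG_7_0

theorem mwG_7_1 : πG [0,1,0,1,1] = πG [0,1,0] := by
  calc πG [0,1,0,1,1] = πG [0,1,0,1,1] := rfl
    _ = πG [0,1,0] := keyG [0,1,0] [1,1] [] [] (bsqG 1)

theorem stG_7_1 : πG [0,1,0,1] * cs2.simple 1 = πG [0,1,0] := (cs2.wordProd_concat 1 [0,1,0,1]).symm.trans mwG_7_1

theorem mwG_8_0 : πG [1,0,1,0,0] = πG [1,0,1] := by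
  calc πG [1,0,1,0,0] = πG [1,0,1,0,0] := rfl
    _ = πG [1,0,1] := keyG [1,0,1] [0,0] [] [] (bsqG 0)

theorem stG_8_0 : πG [1,0,1,0] * cs2.simple 0 = πG [1,0,1] := (cs2.wordProd_concat 0 [1,0,1,0]).symm.trans mwG_8_0

theorem mwG_8_1 : πG [1,0,1,0,1] = πG [1,0,1,0,1] := rfl

theorem stG_8_1 : πG [1,0,1,0] * cs2.simple 1 = πG [1,0,1,0,1] := (cs2.wordProd_concat 1 [1,0,1,0]).symm.trans mwG_8_1

theorem mwG_9_0 : πG [0,1,0,1,0,0] = πG [0,1,0,1] := by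
  calc πG [0,1,0,1,0,0] = πG [0,1,0,1,0,0] := rfl
    _ = πG [0,1,0,1] := keyG [0,1,0,1] [0,0] [] [] (bsqG 0)

theorem stG_9_0 : πG [0,1,0,1,0] * cs2.simple 0 = πG [0,1,0,1] := (cs2.wordProd_concat 0 [0,1,0,1,0]).symm.trans mwG_9_0

theorem mwG_9_1 : πG [0,1,0,1,0,1] = πG [0,1,0,1,0,1] := rfl

theorem stG_9_1 : πG [0,1,0,1,0] * cs2.simple 1 = πG [0,1,0,1,0,1] := (cs2.wordProd_concat 1 [0,1,0,1,0]).symm.trans mwG_9_1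

theorem mwG_10_0 : πG [1,0,1,0,1,0] = πG [0,1,0,1,0,1] := by
  calc πG [1,0,1,0,1,0] = πG [1,0,1,0,1,0] := rfl
    _ = πG [0,1,0,1,0,1] := keyG [] [1,0,1,0,1,0] [0,1,0,1,0,1] [] brG.symm

theorem stG_10_0 : πG [1,0,1,0,1] * cs2.simple 0 = πG [0,1,0,1,0,1] := (cs2.wordProd_concat 0 [1,0,1,0,1]).symm.trans mwG_10_0

theorem mwG_10_1 : πG [1,0,1,0,1,1] = πG [1,0,1,0] := by
  calc πG [1,0,1,0,1,1] = πG [1,0,1,0,1,1] := rfl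
    _ = πG [1,0,1,0] := keyG [1,0,1,0] [1,1] [] [] (bsqG 1)

theorem stG_10_1 : πG [1,0,1,0,1] * cs2.simple 1 = πG [1,0,1,0] := (cs2.wordProd_concat 1 [1,0,1,0,1]).symm.trans mwG_10_1

theorem mwG_11_0 : πG [0,1,0,1,0,1,0] = πG [1,0,1,0,1] := by
  calc πG [0,1,0,1,0,1,0] = πG [0,1,0,1,0,1,0] := rfl
    _ = πG [1,0,1,0,1,0,0] := keyG [] [0,1,0,1,0,1] [1,0,1,0,1,0] [0] brG
    _ = πG [1,0,1,0,1] := keyG [1,0,1,0,1] [0,0] [] [] (bsqG 0)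

theorem stG_11_0 : πG [0,1,0,1,0,1] * cs2.simple 0 = πG [1,0,1,0,1] := (cs2.wordProd_concat 0 [0,1,0,1,0,1]).symm.trans mwG_11_0

theorem mwG_11_1 : πG [0,1,0,1,0,1,1] = πG [0,1,0,1,0] := by
  calc πG [0,1,0,1,0,1,1] = πG [0,1,0,1,0,1,1] := rfl
    _ = πG [0,1,0,1,0] := keyG [0,1,0,1,0] [1,1] [] [] (bsqG 1)

theorem stG_11_1 : πG [0,1,0,1,0,1] * cs2.simple 1 = πG [0,1,0,1,0] := (cs2.wordProd_concat 1 [0,1,0,1,0,1]).symm.trans mwG_11_1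


def ex2 : Fin 2 → List (Fin 4) := fun i => if i = 0 then [1] else [0,2,3]

def expandw : List (Fin 2) → List (Fin 4)
  | [] => []
  | i :: t => ex2 i ++ expandw t

noncomputable def gG2 : Fin 2 → D4Mat.Group := fun i => if i = 0 then cs.simple 1 else π [0,2,3]

theorem liftG : CoxeterMatrix.IsLiftable CoxeterMatrix.G₂ gG2 := by
  have e1 : gG2 0 = π [1] := by simp [gG2, π, CoxeterSystem.wordProd]
  have e2 : gG2 1 = π [0,2,3] := rfl
  intro i i'
  fin_cases i <;> fin_cases i'
  · show (gG2 0 * gG2 0) ^ 1 = 1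
    rw [pow_one, e1, mulw]
    exact (bsq 1).trans cs.wordProd_nil
  · show (gG2 0 * gG2 1) ^ 6 = 1
    rw [e1, e2, mulw]
    show (π [1,0,2,3]) ^ 6 = 1
    rw [show (6:ℕ) = 5+1 from rfl, pow_succ, pow_succ, pow_succ, pow_succ, pow_succ, pow_one,
      mulw, mulw, mulw, mulw, mulw]
    exact eqAB6.trans cs.wordProd_nil
  · show (gG2 1 * gG2 0) ^ 6 = 1
    rw [e1, e2, mulw]
    show (π [0,2,3,1]) ^ 6 = 1
    rw [show (6:ℕ) = 5+1 from rfl, pow_succ, pow_succ, pow_succ, pow_succ, pow_succ, pow_one,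
      mulw, mulw, mulw, mulw, mulw]
    exact eqBA6.trans cs.wordProd_nil
  · show (gG2 1 * gG2 1) ^ 1 = 1
    rw [pow_one, e2, mulw]
    exact eqBB.trans cs.wordProd_nil

noncomputable def ψ : CoxeterMatrix.G₂.Group →* D4Mat.Group := cs2.lift ⟨gG2, liftG⟩

theorem psi_simple (i : Fin 2) : ψ (cs2.simple i) = π (ex2 i) := by
  rw [ψ, CoxeterSystem.lift_apply_simple]
  fin_cases i
  · simp [gG2, ex2, π, CoxeterSystem.wordProd]
  · rfl

theorem psi_word (l : List (Fin 2)) : ψ (πG l) = π (expandw l) := by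
  induction l with
  | nil => simp [πG, π, CoxeterSystem.wordProd, expandw]
  | cons i t ih =>
    rw [show πG (i :: t) = cs2.simple i * πG t from cs2.wordProd_cons i t, map_mul, ih,
      show expandw (i :: t) = ex2 i ++ expandw t from rfl, ← mulw, psi_simple]

theorem chi_word (l : List (Fin 2)) : φ (ψ (πG l)) = ((expandw l).map f4).prod := by
  rw [psi_word, phi_word]

def g2words : List (List (Fin 2)) := [[],[0],[1],[0,1],[1,0],[0,1,0],[1,0,1],[0,1,0,1],[1,0,1,0],[0,1,0,1,0],[1,0,1,0,1],[0,1,0,1,0,1]]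

theorem enumG (w : CoxeterMatrix.G₂.Group) : ∃ l, l ∈ g2words ∧ w = πG l := by
  refine cs2.simple_induction_right
    (p := fun w => ∃ l, l ∈ g2words ∧ w = πG l) w
    ⟨[], by decide, (cs2.wordProd_nil).symm⟩ ?_
  rintro w i ⟨l, hl, rfl⟩
  simp only [g2words, List.mem_cons, List.not_mem_nil, or_false] at hl
  rcases hl with rfl|rfl|rfl|rfl|rfl|rfl|rfl|rfl|rfl|rfl|rfl|rfl
  · fin_cases i
    exacts [⟨_, by decide, stG_0_0⟩, ⟨_, by decide, stG_0_1⟩]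
  · fin_cases i
    exacts [⟨_, by decide, stG_1_0⟩, ⟨_, by decide, stG_1_1⟩]
  · fin_cases i
    exacts [⟨_, by decide, stG_2_0⟩, ⟨_, by decide, stG_2_1⟩]
  · fin_cases i
    exacts [⟨_, by decide, stG_3_0⟩, ⟨_, by decide, stG_3_1⟩]
  · fin_cases i
    exacts [⟨_, by decide, stG_4_0⟩, ⟨_, by decide, stG_4_1⟩]
  · fin_cases i
    exacts [⟨_, by decide, stG_5_0⟩, ⟨_, by decide, stG_5_1⟩]
  · fin_cases i
    exacts [⟨_, by decide, stG_6_0⟩, ⟨_, by decide, stG_6_1⟩]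
  · fin_cases i
    exacts [⟨_, by decide, stG_7_0⟩, ⟨_, by decide, stG_7_1⟩]
  · fin_cases i
    exacts [⟨_, by decide, stG_8_0⟩, ⟨_, by decide, stG_8_1⟩]
  · fin_cases i
    exacts [⟨_, by decide, stG_9_0⟩, ⟨_, by decide, stG_9_1⟩]
  · fin_cases i
    exacts [⟨_, by decide, stG_10_0⟩, ⟨_, by decide, stG_10_1⟩]
  · fin_cases i
    exacts [⟨_, by decide, stG_11_0⟩, ⟨_, by decide, stG_11_1⟩]

theorem psi_inj : Function.Injective ψ := by
  intro x y h
  obtain ⟨lx, hx, rfl⟩ := enumG x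
  obtain ⟨ly, hy, rfl⟩ := enumG y
  simp only [g2words, List.mem_cons, List.not_mem_nil, or_false] at hx hy
  rcases hx with rfl|rfl|rfl|rfl|rfl|rfl|rfl|rfl|rfl|rfl|rfl|rfl
  · rcases hy with rfl|rfl|rfl|rfl|rfl|rfl|rfl|rfl|rfl|rfl|rfl|rfl
    · rfl
    · exact absurd ((chi_word _).symm.trans ((congrArg φ h).trans (chi_word _))) (by decide)
    · exact absurd ((chi_word _).symm.trans ((congrArg φ h).trans (chi_word _))) (by decide)
    · exact absurd ((chi_word _).symm.trans ((congrArg φ h).trans (chi_word _))) (by decide)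
    · exact absurd ((chi_word _).symm.trans ((congrArg φ h).trans (chi_word _))) (by decide)
    · exact absurd ((chi_word _).symm.trans ((congrArg φ h).trans (chi_word _))) (by decide)
    · exact absurd ((chi_word _).symm.trans ((congrArg φ h).trans (chi_word _))) (by decide)
    · exact absurd ((chi_word _).symm.trans ((congrArg φ h).trans (chi_word _))) (by decide)
    · exact absurd ((chi_word _).symm.trans ((congrArg φ h).trans (chi_word _))) (by decide)
    · exact absurd ((chi_word _).symm.trans ((congrArg φ h).trans (chi_word _))) (by decide)
    · exact absurd ((chi_word _).symm.trans ((congrArg φ h).trans (chi_word _))) (by decide)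
    · exact absurd ((chi_word _).symm.trans ((congrArg φ h).trans (chi_word _))) (by decide)
  · rcases hy with rfl|rfl|rfl|rfl|rfl|rfl|rfl|rfl|rfl|rfl|rfl|rfl
    · exact absurd ((chi_word _).symm.trans ((congrArg φ h).trans (chi_word _))) (by decide)
    · rfl
    · exact absurd ((chi_word _).symm.trans ((congrArg φ h).trans (chi_word _))) (by decide)
    · exact absurd ((chi_word _).symm.trans ((congrArg φ h).trans (chi_word _))) (by decide)
    · exact absurd ((chi_word _).symm.trans ((congrArg φ h).trans (chi_word _))) (by decide)
    · exact absurd ((chi_word _).symm.trans ((congrArg φ h).trans (chi_word _))) (by decide)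
    · exact absurd ((chi_word _).symm.trans ((congrArg φ h).trans (chi_word _))) (by decide)
    · exact absurd ((chi_word _).symm.trans ((congrArg φ h).trans (chi_word _))) (by decide)
    · exact absurd ((chi_word _).symm.trans ((congrArg φ h).trans (chi_word _))) (by decide)
    · exact absurd ((chi_word _).symm.trans ((congrArg φ h).trans (chi_word _))) (by decide)
    · exact absurd ((chi_word _).symm.trans ((congrArg φ h).trans (chi_word _))) (by decide)
    · exact absurd ((chi_word _).symm.trans ((congrArg φ h).trans (chi_word _))) (by decide)
  · rcases hy with rfl|rfl|rfl|rfl|rfl|rfl|rfl|rfl|rfl|rfl|rfl|rfl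
    · exact absurd ((chi_word _).symm.trans ((congrArg φ h).trans (chi_word _))) (by decide)
    · exact absurd ((chi_word _).symm.trans ((congrArg φ h).trans (chi_word _))) (by decide)
    · rfl
    · exact absurd ((chi_word _).symm.trans ((congrArg φ h).trans (chi_word _))) (by decide)
    · exact absurd ((chi_word _).symm.trans ((congrArg φ h).trans (chi_word _))) (by decide)
    · exact absurd ((chi_word _).symm.trans ((congrArg φ h).trans (chi_word _))) (by decide)
    · exact absurd ((chi_word _).symm.trans ((congrArg φ h).trans (chi_word _))) (by decide)
    · exact absurd ((chi_word _).symm.trans ((congrArg φ h).trans (chi_word _))) (by decide)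
    · exact absurd ((chi_word _).symm.trans ((congrArg φ h).trans (chi_word _))) (by decide)
    · exact absurd ((chi_word _).symm.trans ((congrArg φ h).trans (chi_word _))) (by decide)
    · exact absurd ((chi_word _).symm.trans ((congrArg φ h).trans (chi_word _))) (by decide)
    · exact absurd ((chi_word _).symm.trans ((congrArg φ h).trans (chi_word _))) (by decide)
  · rcases hy with rfl|rfl|rfl|rfl|rfl|rfl|rfl|rfl|rfl|rfl|rfl|rfl
    · exact absurd ((chi_word _).symm.trans ((congrArg φ h).trans (chi_word _))) (by decide)
    · exact absurd ((chi_word _).symm.trans ((congrArg φ h).trans (chi_word _))) (by decide)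
    · exact absurd ((chi_word _).symm.trans ((congrArg φ h).trans (chi_word _))) (by decide)
    · rfl
    · exact absurd ((chi_word _).symm.trans ((congrArg φ h).trans (chi_word _))) (by decide)
    · exact absurd ((chi_word _).symm.trans ((congrArg φ h).trans (chi_word _))) (by decide)
    · exact absurd ((chi_word _).symm.trans ((congrArg φ h).trans (chi_word _))) (by decide)
    · exact absurd ((chi_word _).symm.trans ((congrArg φ h).trans (chi_word _))) (by decide)
    · exact absurd ((chi_word _).symm.trans ((congrArg φ h).trans (chi_word _))) (by decide)
    · exact absurd ((chi_word _).symm.trans ((congrArg φ h).trans (chi_word _))) (by decide)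
    · exact absurd ((chi_word _).symm.trans ((congrArg φ h).trans (chi_word _))) (by decide)
    · exact absurd ((chi_word _).symm.trans ((congrArg φ h).trans (chi_word _))) (by decide)
  · rcases hy with rfl|rfl|rfl|rfl|rfl|rfl|rfl|rfl|rfl|rfl|rfl|rfl
    · exact absurd ((chi_word _).symm.trans ((congrArg φ h).trans (chi_word _))) (by decide)
    · exact absurd ((chi_word _).symm.trans ((congrArg φ h).trans (chi_word _))) (by decide)
    · exact absurd ((chi_word _).symm.trans ((congrArg φ h).trans (chi_word _))) (by decide)
    · exact absurd ((chi_word _).symm.trans ((congrArg φ h).trans (chi_word _))) (by decide)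
    · rfl
    · exact absurd ((chi_word _).symm.trans ((congrArg φ h).trans (chi_word _))) (by decide)
    · exact absurd ((chi_word _).symm.trans ((congrArg φ h).trans (chi_word _))) (by decide)
    · exact absurd ((chi_word _).symm.trans ((congrArg φ h).trans (chi_word _))) (by decide)
    · exact absurd ((chi_word _).symm.trans ((congrArg φ h).trans (chi_word _))) (by decide)
    · exact absurd ((chi_word _).symm.trans ((congrArg φ h).trans (chi_word _))) (by decide)
    · exact absurd ((chi_word _).symm.trans ((congrArg φ h).trans (chi_word _))) (by decide)
    · exact absurd ((chi_word _).symm.trans ((congrArg φ h).trans (chi_word _))) (by decide)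
  · rcases hy with rfl|rfl|rfl|rfl|rfl|rfl|rfl|rfl|rfl|rfl|rfl|rfl
    · exact absurd ((chi_word _).symm.trans ((congrArg φ h).trans (chi_word _))) (by decide)
    · exact absurd ((chi_word _).symm.trans ((congrArg φ h).trans (chi_word _))) (by decide)
    · exact absurd ((chi_word _).symm.trans ((congrArg φ h).trans (chi_word _))) (by decide)
    · exact absurd ((chi_word _).symm.trans ((congrArg φ h).trans (chi_word _))) (by decide)
    · exact absurd ((chi_word _).symm.trans ((congrArg φ h).trans (chi_word _))) (by decide)
    · rfl
    · exact absurd ((chi_word _).symm.trans ((congrArg φ h).trans (chi_word _))) (by decide)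
    · exact absurd ((chi_word _).symm.trans ((congrArg φ h).trans (chi_word _))) (by decide)
    · exact absurd ((chi_word _).symm.trans ((congrArg φ h).trans (chi_word _))) (by decide)
    · exact absurd ((chi_word _).symm.trans ((congrArg φ h).trans (chi_word _))) (by decide)
    · exact absurd ((chi_word _).symm.trans ((congrArg φ h).trans (chi_word _))) (by decide)
    · exact absurd ((chi_word _).symm.trans ((congrArg φ h).trans (chi_word _))) (by decide)
  · rcases hy with rfl|rfl|rfl|rfl|rfl|rfl|rfl|rfl|rfl|rfl|rfl|rfl
    · exact absurd ((chi_word _).symm.trans ((congrArg φ h).trans (chi_word _))) (by decide)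
    · exact absurd ((chi_word _).symm.trans ((congrArg φ h).trans (chi_word _))) (by decide)
    · exact absurd ((chi_word _).symm.trans ((congrArg φ h).trans (chi_word _))) (by decide)
    · exact absurd ((chi_word _).symm.trans ((congrArg φ h).trans (chi_word _))) (by decide)
    · exact absurd ((chi_word _).symm.trans ((congrArg φ h).trans (chi_word _))) (by decide)
    · exact absurd ((chi_word _).symm.trans ((congrArg φ h).trans (chi_word _))) (by decide)
    · rfl
    · exact absurd ((chi_word _).symm.trans ((congrArg φ h).trans (chi_word _))) (by decide)
    · exact absurd ((chi_word _).symm.trans ((congrArg φ h).trans (chi_word _))) (by decide)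
    · exact absurd ((chi_word _).symm.trans ((congrArg φ h).trans (chi_word _))) (by decide)
    · exact absurd ((chi_word _).symm.trans ((congrArg φ h).trans (chi_word _))) (by decide)
    · exact absurd ((chi_word _).symm.trans ((congrArg φ h).trans (chi_word _))) (by decide)
  · rcases hy with rfl|rfl|rfl|rfl|rfl|rfl|rfl|rfl|rfl|rfl|rfl|rfl
    · exact absurd ((chi_word _).symm.trans ((congrArg φ h).trans (chi_word _))) (by decide)
    · exact absurd ((chi_word _).symm.trans ((congrArg φ h).trans (chi_word _))) (by decide)
    · exact absurd ((chi_word _).symm.trans ((congrArg φ h).trans (chi_word _))) (by decide)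
    · exact absurd ((chi_word _).symm.trans ((congrArg φ h).trans (chi_word _))) (by decide)
    · exact absurd ((chi_word _).symm.trans ((congrArg φ h).trans (chi_word _))) (by decide)
    · exact absurd ((chi_word _).symm.trans ((congrArg φ h).trans (chi_word _))) (by decide)
    · exact absurd ((chi_word _).symm.trans ((congrArg φ h).trans (chi_word _))) (by decide)
    · rfl
    · exact absurd ((chi_word _).symm.trans ((congrArg φ h).trans (chi_word _))) (by decide)
    · exact absurd ((chi_word _).symm.trans ((congrArg φ h).trans (chi_word _))) (by decide)
    · exact absurd ((chi_word _).symm.trans ((congrArg φ h).trans (chi_word _))) (by decide)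
    · exact absurd ((chi_word _).symm.trans ((congrArg φ h).trans (chi_word _))) (by decide)
  · rcases hy with rfl|rfl|rfl|rfl|rfl|rfl|rfl|rfl|rfl|rfl|rfl|rfl
    · exact absurd ((chi_word _).symm.trans ((congrArg φ h).trans (chi_word _))) (by decide)
    · exact absurd ((chi_word _).symm.trans ((congrArg φ h).trans (chi_word _))) (by decide)
    · exact absurd ((chi_word _).symm.trans ((congrArg φ h).trans (chi_word _))) (by decide)
    · exact absurd ((chi_word _).symm.trans ((congrArg φ h).trans (chi_word _))) (by decide)
    · exact absurd ((chi_word _).symm.trans ((congrArg φ h).trans (chi_word _))) (by decide)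
    · exact absurd ((chi_word _).symm.trans ((congrArg φ h).trans (chi_word _))) (by decide)
    · exact absurd ((chi_word _).symm.trans ((congrArg φ h).trans (chi_word _))) (by decide)
    · exact absurd ((chi_word _).symm.trans ((congrArg φ h).trans (chi_word _))) (by decide)
    · rfl
    · exact absurd ((chi_word _).symm.trans ((congrArg φ h).trans (chi_word _))) (by decide)
    · exact absurd ((chi_word _).symm.trans ((congrArg φ h).trans (chi_word _))) (by decide)
    · exact absurd ((chi_word _).symm.trans ((congrArg φ h).trans (chi_word _))) (by decide)
  · rcases hy with rfl|rfl|rfl|rfl|rfl|rfl|rfl|rfl|rfl|rfl|rfl|rfl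
    · exact absurd ((chi_word _).symm.trans ((congrArg φ h).trans (chi_word _))) (by decide)
    · exact absurd ((chi_word _).symm.trans ((congrArg φ h).trans (chi_word _))) (by decide)
    · exact absurd ((chi_word _).symm.trans ((congrArg φ h).trans (chi_word _))) (by decide)
    · exact absurd ((chi_word _).symm.trans ((congrArg φ h).trans (chi_word _))) (by decide)
    · exact absurd ((chi_word _).symm.trans ((congrArg φ h).trans (chi_word _))) (by decide)
    · exact absurd ((chi_word _).symm.trans ((congrArg φ h).trans (chi_word _))) (by decide)
    · exact absurd ((chi_word _).symm.trans ((congrArg φ h).trans (chi_word _))) (by decide)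
    · exact absurd ((chi_word _).symm.trans ((congrArg φ h).trans (chi_word _))) (by decide)
    · exact absurd ((chi_word _).symm.trans ((congrArg φ h).trans (chi_word _))) (by decide)
    · rfl
    · exact absurd ((chi_word _).symm.trans ((congrArg φ h).trans (chi_word _))) (by decide)
    · exact absurd ((chi_word _).symm.trans ((congrArg φ h).trans (chi_word _))) (by decide)
  · rcases hy with rfl|rfl|rfl|rfl|rfl|rfl|rfl|rfl|rfl|rfl|rfl|rfl
    · exact absurd ((chi_word _).symm.trans ((congrArg φ h).trans (chi_word _))) (by decide)
    · exact absurd ((chi_word _).symm.trans ((congrArg φ h).trans (chi_word _))) (by decide)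
    · exact absurd ((chi_word _).symm.trans ((congrArg φ h).trans (chi_word _))) (by decide)
    · exact absurd ((chi_word _).symm.trans ((congrArg φ h).trans (chi_word _))) (by decide)
    · exact absurd ((chi_word _).symm.trans ((congrArg φ h).trans (chi_word _))) (by decide)
    · exact absurd ((chi_word _).symm.trans ((congrArg φ h).trans (chi_word _))) (by decide)
    · exact absurd ((chi_word _).symm.trans ((congrArg φ h).trans (chi_word _))) (by decide)
    · exact absurd ((chi_word _).symm.trans ((congrArg φ h).trans (chi_word _))) (by decide)
    · exact absurd ((chi_word _).symm.trans ((congrArg φ h).trans (chi_word _))) (by decide)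
    · exact absurd ((chi_word _).symm.trans ((congrArg φ h).trans (chi_word _))) (by decide)
    · rfl
    · exact absurd ((chi_word _).symm.trans ((congrArg φ h).trans (chi_word _))) (by decide)
  · rcases hy with rfl|rfl|rfl|rfl|rfl|rfl|rfl|rfl|rfl|rfl|rfl|rfl
    · exact absurd ((chi_word _).symm.trans ((congrArg φ h).trans (chi_word _))) (by decide)
    · exact absurd ((chi_word _).symm.trans ((congrArg φ h).trans (chi_word _))) (by decide)
    · exact absurd ((chi_word _).symm.trans ((congrArg φ h).trans (chi_word _))) (by decide)
    · exact absurd ((chi_word _).symm.trans ((congrArg φ h).trans (chi_word _))) (by decide)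
    · exact absurd ((chi_word _).symm.trans ((congrArg φ h).trans (chi_word _))) (by decide)
    · exact absurd ((chi_word _).symm.trans ((congrArg φ h).trans (chi_word _))) (by decide)
    · exact absurd ((chi_word _).symm.trans ((congrArg φ h).trans (chi_word _))) (by decide)
    · exact absurd ((chi_word _).symm.trans ((congrArg φ h).trans (chi_word _))) (by decide)
    · exact absurd ((chi_word _).symm.trans ((congrArg φ h).trans (chi_word _))) (by decide)
    · exact absurd ((chi_word _).symm.trans ((congrArg φ h).trans (chi_word _))) (by decide)
    · exact absurd ((chi_word _).symm.trans ((congrArg φ h).trans (chi_word _))) (by decide)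
    · rfl


theorem auto_word (ρ : D4Mat.Group ≃* D4Mat.Group) (u : Fin 4 → Fin 4)
    (hu : ∀ i, ρ (cs.simple i) = cs.simple (u i)) (l : List (Fin 4)) :
    ρ (π l) = π (l.map u) := by
  induction l with
  | nil => simp [π, CoxeterSystem.wordProd]
  | cons i t ih =>
    rw [show π (i :: t) = cs.simple i * π t from cs.wordProd_cons i t, map_mul, ih, hu,
      List.map_cons,
      show π (u i :: List.map u t) = cs.simple (u i) * π (List.map u t) from cs.wordProd_cons _ _]

def sigf : Fin 4 → Fin 4 := ![2, 1, 3, 0]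
def tauf : Fin 4 → Fin 4 := ![2, 1, 0, 3]

theorem psifix (ρ : D4Mat.Group ≃* D4Mat.Group) (u : Fin 4 → Fin 4)
    (hu : ∀ i, ρ (cs.simple i) = cs.simple (u i)) (h1 : u 1 = 1)
    (he : π (List.map u [0,2,3]) = π [0,2,3]) (g : CoxeterMatrix.G₂.Group) :
    ρ (ψ g) = ψ g := by
  have hcomp : ρ.toMonoidHom.comp ψ = ψ := by
    refine cs2.ext_simple fun i => ?_
    fin_cases i
    · show ρ (ψ (cs2.simple 0)) = ψ (cs2.simple 0)
      rw [psi_simple]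
      show ρ (π [1]) = π [1]
      rw [auto_word ρ u hu, show List.map u [1] = [u 1] from rfl, h1]
    · show ρ (ψ (cs2.simple 1)) = ψ (cs2.simple 1)
      rw [psi_simple]
      show ρ (π [0,2,3]) = π [0,2,3]
      rw [auto_word ρ u hu, he]
  exact DFunLike.congr_fun hcomp g

theorem steplem (m : List (Fin 2)) (r : List (Fin 4)) (i : Fin 4) (m' : List (Fin 2))
    (r' : List (Fin 4)) (h : π (r ++ [i]) = π (expandw m' ++ r')) :
    (ψ (πG m) * π r) * cs.simple i = ψ (πG (m ++ m')) * π r' := by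
  calc (ψ (πG m) * π r) * cs.simple i
      = ψ (πG m) * (π r * cs.simple i) := mul_assoc _ _ _
    _ = ψ (πG m) * (π (expandw m') * π r') := by
        rw [show π r * cs.simple i = π (r ++ [i]) by
          rw [show r ++ [i] = r.concat i from (List.concat_eq_append (as := r) (a := i)).symm]
          exact (cs.wordProd_concat i r).symm, h, ← mulw]
    _ = (ψ (πG m) * ψ (πG m')) * π r' := by rw [← psi_word m']; exact (mul_assoc _ _ _).symm
    _ = ψ (πG (m ++ m')) * π r' := by rw [← map_mul, mulwG]

def reps : List (List (Fin 4)) := [[],[0],[2],[3],[0,1],[2,1],[3,1],[0,1,2],[0,1,3],[2,1,0],[2,1,3],[3,1,0],[3,1,2],[0,1,2,3],[2,1,0,3],[3,1,0,2]]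

theorem decomp (w : D4Mat.Group) : ∃ m r, r ∈ reps ∧ w = ψ (πG m) * π r := by
  refine cs.simple_induction_right
    (p := fun w => ∃ m r, r ∈ reps ∧ w = ψ (πG m) * π r) w
    ⟨[], [], by decide, by simp [π, πG, CoxeterSystem.wordProd]⟩ ?_
  rintro w i ⟨m, r, hr, rfl⟩
  simp only [reps, List.mem_cons, List.not_mem_nil, or_false] at hr
  rcases hr with rfl|rfl|rfl|rfl|rfl|rfl|rfl|rfl|rfl|rfl|rfl|rfl|rfl|rfl|rfl|rfl
  · fin_cases i
    exacts [⟨m ++ [], [0], by decide, steplem m _ _ _ _ ceq_0_0⟩, ⟨m ++ [0], [], by decide, steplem m _ _ _ _ ceq_0_1⟩, ⟨m ++ [], [2], by decide, steplem m _ _ _ _ ceq_0_2⟩, ⟨m ++ [], [3], by decide, steplem m _ _ _ _ ceq_0_3⟩]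
  · fin_cases i
    exacts [⟨m ++ [], [], by decide, steplem m _ _ _ _ ceq_1_0⟩, ⟨m ++ [], [0,1], by decide, steplem m _ _ _ _ ceq_1_1⟩, ⟨m ++ [1], [3], by decide, steplem m _ _ _ _ ceq_1_2⟩, ⟨m ++ [1], [2], by decide, steplem m _ _ _ _ ceq_1_3⟩]
  · fin_cases i
    exacts [⟨m ++ [1], [3], by decide, steplem m _ _ _ _ ceq_2_0⟩, ⟨m ++ [], [2,1], by decide, steplem m _ _ _ _ ceq_2_1⟩, ⟨m ++ [], [], by decide, steplem m _ _ _ _ ceq_2_2⟩, ⟨m ++ [1], [0], by decide, steplem m _ _ _ _ ceq_2_3⟩]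
  · fin_cases i
    exacts [⟨m ++ [1], [2], by decide, steplem m _ _ _ _ ceq_3_0⟩, ⟨m ++ [], [3,1], by decide, steplem m _ _ _ _ ceq_3_1⟩, ⟨m ++ [1], [0], by decide, steplem m _ _ _ _ ceq_3_2⟩, ⟨m ++ [], [], by decide, steplem m _ _ _ _ ceq_3_3⟩]
  · fin_cases i
    exacts [⟨m ++ [0], [0,1], by decide, steplem m _ _ _ _ ceq_4_0⟩, ⟨m ++ [], [0], by decide, steplem m _ _ _ _ ceq_4_1⟩, ⟨m ++ [], [0,1,2], by decide, steplem m _ _ _ _ ceq_4_2⟩, ⟨m ++ [], [0,1,3], by decide, steplem m _ _ _ _ ceq_4_3⟩]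
  · fin_cases i
    exacts [⟨m ++ [], [2,1,0], by decide, steplem m _ _ _ _ ceq_5_0⟩, ⟨m ++ [], [2], by decide, steplem m _ _ _ _ ceq_5_1⟩, ⟨m ++ [0], [2,1], by decide, steplem m _ _ _ _ ceq_5_2⟩, ⟨m ++ [], [2,1,3], by decide, steplem m _ _ _ _ ceq_5_3⟩]
  · fin_cases i
    exacts [⟨m ++ [], [3,1,0], by decide, steplem m _ _ _ _ ceq_6_0⟩, ⟨m ++ [], [3], by decide, steplem m _ _ _ _ ceq_6_1⟩, ⟨m ++ [], [3,1,2], by decide, steplem m _ _ _ _ ceq_6_2⟩, ⟨m ++ [0], [3,1], by decide, steplem m _ _ _ _ ceq_6_3⟩]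
  · fin_cases i
    exacts [⟨m ++ [0], [0,1,2], by decide, steplem m _ _ _ _ ceq_7_0⟩, ⟨m ++ [1], [3,1,2], by decide, steplem m _ _ _ _ ceq_7_1⟩, ⟨m ++ [], [0,1], by decide, steplem m _ _ _ _ ceq_7_2⟩, ⟨m ++ [], [0,1,2,3], by decide, steplem m _ _ _ _ ceq_7_3⟩]
  · fin_cases i
    exacts [⟨m ++ [0], [0,1,3], by decide, steplem m _ _ _ _ ceq_8_0⟩, ⟨m ++ [1], [2,1,3], by decide, steplem m _ _ _ _ ceq_8_1⟩, ⟨m ++ [], [0,1,2,3], by decide, steplem m _ _ _ _ ceq_8_2⟩, ⟨m ++ [], [0,1], by decide, steplem m _ _ _ _ ceq_8_3⟩]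
  · fin_cases i
    exacts [⟨m ++ [], [2,1], by decide, steplem m _ _ _ _ ceq_9_0⟩, ⟨m ++ [1], [3,1,0], by decide, steplem m _ _ _ _ ceq_9_1⟩, ⟨m ++ [0], [2,1,0], by decide, steplem m _ _ _ _ ceq_9_2⟩, ⟨m ++ [], [2,1,0,3], by decide, steplem m _ _ _ _ ceq_9_3⟩]
  · fin_cases i
    exacts [⟨m ++ [], [2,1,0,3], by decide, steplem m _ _ _ _ ceq_10_0⟩, ⟨m ++ [1], [0,1,3], by decide, steplem m _ _ _ _ ceq_10_1⟩, ⟨m ++ [0], [2,1,3], by decide, steplem m _ _ _ _ ceq_10_2⟩, ⟨m ++ [], [2,1], by decide, steplem m _ _ _ _ ceq_10_3⟩]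
  · fin_cases i
    exacts [⟨m ++ [], [3,1], by decide, steplem m _ _ _ _ ceq_11_0⟩, ⟨m ++ [1], [2,1,0], by decide, steplem m _ _ _ _ ceq_11_1⟩, ⟨m ++ [], [3,1,0,2], by decide, steplem m _ _ _ _ ceq_11_2⟩, ⟨m ++ [0], [3,1,0], by decide, steplem m _ _ _ _ ceq_11_3⟩]
  · fin_cases i
    exacts [⟨m ++ [], [3,1,0,2], by decide, steplem m _ _ _ _ ceq_12_0⟩, ⟨m ++ [1], [0,1,2], by decide, steplem m _ _ _ _ ceq_12_1⟩, ⟨m ++ [], [3,1], by decide, steplem m _ _ _ _ ceq_12_2⟩, ⟨m ++ [0], [3,1,2], by decide, steplem m _ _ _ _ ceq_12_3⟩]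
  · fin_cases i
    exacts [⟨m ++ [0], [0,1,2,3], by decide, steplem m _ _ _ _ ceq_13_0⟩, ⟨m ++ [1,0,1], [0,1,2,3], by decide, steplem m _ _ _ _ ceq_13_1⟩, ⟨m ++ [], [0,1,3], by decide, steplem m _ _ _ _ ceq_13_2⟩, ⟨m ++ [], [0,1,2], by decide, steplem m _ _ _ _ ceq_13_3⟩]
  · fin_cases i
    exacts [⟨m ++ [], [2,1,3], by decide, steplem m _ _ _ _ ceq_14_0⟩, ⟨m ++ [1,0,1], [2,1,0,3], by decide, steplem m _ _ _ _ ceq_14_1⟩, ⟨m ++ [0], [2,1,0,3], by decide, steplem m _ _ _ _ ceq_14_2⟩, ⟨m ++ [], [2,1,0], by decide, steplem m _ _ _ _ ceq_14_3⟩]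
  · fin_cases i
    exacts [⟨m ++ [], [3,1,2], by decide, steplem m _ _ _ _ ceq_15_0⟩, ⟨m ++ [1,0,1], [3,1,0,2], by decide, steplem m _ _ _ _ ceq_15_1⟩, ⟨m ++ [], [3,1,0], by decide, steplem m _ _ _ _ ceq_15_2⟩, ⟨m ++ [0], [3,1,0,2], by decide, steplem m _ _ _ _ ceq_15_3⟩]

theorem main (ρ : D4Mat.Group ≃* D4Mat.Group)
    (hsρ : ∀ i, ρ (cs.simple i) = cs.simple (sigf i)) :
    ∀ w : D4Mat.Group, ρ w = w → ∃ g, ψ g = w := by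
  intro w hw
  obtain ⟨m, r, hr, rfl⟩ := decomp w
  have hfix : ρ (ψ (πG m)) = ψ (πG m) := psifix ρ sigf hsρ rfl rgen (πG m)
  have hcancel : π (List.map sigf r) = π r := by
    have := hw
    rw [map_mul, hfix, auto_word ρ sigf hsρ] at this
    exact mul_left_cancel this
  simp only [reps, List.mem_cons, List.not_mem_nil, or_false] at hr
  rcases hr with rfl|rfl|rfl|rfl|rfl|rfl|rfl|rfl|rfl|rfl|rfl|rfl|rfl|rfl|rfl|rfl
  · exact ⟨πG m, by rw [show π ([] : List (Fin 4)) = 1 from cs.wordProd_nil, mul_one]⟩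
  · exact absurd hcancel (neq _ _ (by decide))
  · exact absurd hcancel (neq _ _ (by decide))
  · exact absurd hcancel (neq _ _ (by decide))
  · exact absurd hcancel (neq _ _ (by decide))
  · exact absurd hcancel (neq _ _ (by decide))
  · exact absurd hcancel (neq _ _ (by decide))
  · exact absurd hcancel (neq _ _ (by decide))
  · exact absurd hcancel (neq _ _ (by decide))
  · exact absurd hcancel (neq _ _ (by decide))
  · exact absurd hcancel (neq _ _ (by decide))
  · exact absurd hcancel (neq _ _ (by decide))
  · exact absurd hcancel (neq _ _ (by decide))
  · exact absurd hcancel (neq _ _ (by decide))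
  · exact absurd hcancel (neq _ _ (by decide))
  · exact absurd hcancel (neq _ _ (by decide))


theorem simple_eq : cs.simple = D4Mat.simple := CoxeterMatrix.toCoxeterSystem_simple D4Mat

theorem fixedSubgroup_D4_triality_iso_G2
    (ρ τ : D4Mat.Group ≃* D4Mat.Group)
    (hρ : ρ (D4Mat.simple 0) = D4Mat.simple 2 ∧ ρ (D4Mat.simple 2) = D4Mat.simple 3 ∧
          ρ (D4Mat.simple 3) = D4Mat.simple 0 ∧ ρ (D4Mat.simple 1) = D4Mat.simple 1)
    (hτ : τ (D4Mat.simple 0) = D4Mat.simple 2 ∧ τ (D4Mat.simple 2) = D4Mat.simple 0 ∧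
          τ (D4Mat.simple 3) = D4Mat.simple 3 ∧ τ (D4Mat.simple 1) = D4Mat.simple 1) :
    fixedSubgroup ρ = fixedSubgroup ρ ⊓ fixedSubgroup τ ∧
    Nonempty ((fixedSubgroup ρ) ≃* CoxeterMatrix.G₂.Group) ∧
    Nonempty ((fixedSubgroup ρ ⊓ fixedSubgroup τ : Subgroup D4Mat.Group) ≃*
      CoxeterMatrix.G₂.Group) := by
  have hsρ : ∀ i, ρ (cs.simple i) = cs.simple (sigf i) := by
    intro i
    fin_cases i
    · exact simple_eq ▸ hρ.1
    · exact simple_eq ▸ hρ.2.2.2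
    · exact simple_eq ▸ hρ.2.1
    · exact simple_eq ▸ hρ.2.2.1
  have hsτ : ∀ i, τ (cs.simple i) = cs.simple (tauf i) := by
    intro i
    fin_cases i
    · exact simple_eq ▸ hτ.1
    · exact simple_eq ▸ hτ.2.2.2
    · exact simple_eq ▸ hτ.2.1
    · exact simple_eq ▸ hτ.2.2.1
  have hmain := main ρ hsρ
  have hmemρ : ∀ g, ψ g ∈ fixedSubgroup ρ := fun g => psifix ρ sigf hsρ rfl rgen g
  have hmemτ : ∀ g, τ (ψ g) = ψ g := fun g => psifix τ tauf hsτ rfl tgen g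
  let ψ' : CoxeterMatrix.G₂.Group →* fixedSubgroup ρ := ψ.codRestrict (fixedSubgroup ρ) hmemρ
  have hbij : Function.Bijective ψ' := by
    constructor
    · intro a b hab
      exact psi_inj (congrArg Subtype.val hab)
    · rintro ⟨w, hw⟩
      obtain ⟨g, hg⟩ := hmain w hw
      exact ⟨g, Subtype.ext hg⟩
  have e : CoxeterMatrix.G₂.Group ≃* fixedSubgroup ρ := MulEquiv.ofBijective ψ' hbij
  have h1 : fixedSubgroup ρ = fixedSubgroup ρ ⊓ fixedSubgroup τ := by
    refine le_antisymm (le_inf le_rfl fun w hw => ?_) inf_le_left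
    obtain ⟨g, rfl⟩ := hmain w hw
    exact hmemτ g
  exact ⟨h1, ⟨e.symm⟩, h1 ▸ ⟨e.symm⟩⟩
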